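/- Let ℓ, m, n be nonnegative integers with ℓ + m < n. Then (1/n) · Σ_{j=1}^{n} (ζ^{2j}+1)^{2ℓ}(ζ^{2j}-1)^{2m} / ζ^{2j(ℓ+m)} equals the coefficient of x^{ℓ+m} in the Maclaurin series of (1-4x)^{m-1/2}, where ζ is a primitive 2n-th root of unity in ℂ. -/

import Mathlib

open Finset
open Polynomial
lemma revX1 : (X + 1 : ℂ[X]).reverse = X + 1 := by
  rw [show (X + 1 : ℂ[X]) = X + C 1 by simp]
  rw [reverse_add_C]
  simp [reverse, natDegree_X]
  ring
lemma revXm1 : (X - 1 : ℂ[X]).reverse = 1 - X := by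
  rw [show (X - 1 : ℂ[X]) = X + C (-1) by simp [sub_eq_add_neg]]
  rw [reverse_add_C]
  simp [reverse, natDegree_X]
  ring
lemma revpow (p : ℂ[X]) (k : ℕ) : (p ^ k).reverse = p.reverse ^ k := by
  induction k with
  | zero => simp [reverse]
  | succ k ih => rw [pow_succ, reverse_mul_of_domain, ih, pow_succ]
lemma revP (l m : ℕ) : ((X + 1) ^ (2*l) * (X - 1) ^ (2*m) : ℂ[X]).reverse
    = (X + 1) ^ (2*l) * (X - 1) ^ (2*m) := by
  rw [reverse_mul_of_domain, revpow, revpow, revX1, revXm1,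
    show ((1 - X : ℂ[X]))^(2*m) = ((-1)^(2*m))*(X-1)^(2*m) by rw [← mul_pow]; ring_nf,
    show ((-1:ℂ[X])^(2*m)) = 1 by rw [pow_mul]; norm_num]
  ring
lemma ndP (l m : ℕ) : ((X + 1) ^ (2*l) * (X - 1) ^ (2*m) : ℂ[X]).natDegree = 2*l + 2*m := by
  have h1 : ((X + 1 : ℂ[X])).Monic := by simpa using monic_X_add_C (1:ℂ)
  have h2 : ((X - 1 : ℂ[X])).Monic := by
    simpa [sub_eq_add_neg] using monic_X_add_C (-1:ℂ)
  have d1 : (X + 1 : ℂ[X]).natDegree = 1 := by simpa using natDegree_X_add_C (1:ℂ)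
  have d2 : (X - 1 : ℂ[X]).natDegree = 1 := by
    rw [show (X - 1 : ℂ[X]) = X + C (-1) by simp [sub_eq_add_neg]]
    exact natDegree_X_add_C (-1:ℂ)
  rw [(h1.pow _).natDegree_mul (h2.pow _), h1.natDegree_pow, h2.natDegree_pow, d1, d2]
  ring
lemma palP (l m : ℕ) (k : ℕ) (hk : k ≤ 2*l + 2*m) :
    ((X + 1) ^ (2*l) * (X - 1) ^ (2*m) : ℂ[X]).coeff k
    = ((X + 1) ^ (2*l) * (X - 1) ^ (2*m) : ℂ[X]).coeff (2*l + 2*m - k) := by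
  conv_lhs => rw [← revP, coeff_reverse, ndP, revAt_le hk]

lemma odeP (l m : ℕ) :
    (1 - X^2) * derivative ((X+1)^(2*l)*(X-1)^(2*m) : ℂ[X]) =
    (C ((2*l:ℂ) - 2*m) - C ((2*l:ℂ) + 2*m) * X) * ((X+1)^(2*l)*(X-1)^(2*m)) := by
  have dp : derivative ((X+1)^(2*l) : ℂ[X]) = C ((2*l:ℕ) : ℂ) * (X+1)^(2*l-1) := by
    rw [derivative_pow]
    simp [derivative_X_add_C]
  have dq : derivative ((X-1)^(2*m) : ℂ[X]) = C ((2*m:ℕ) : ℂ) * (X-1)^(2*m-1) := by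
    rw [derivative_pow]
    have : derivative (X - 1 : ℂ[X]) = 1 := by
      rw [show (X - 1 : ℂ[X]) = X + C (-1) by simp [sub_eq_add_neg], derivative_X_add_C]
    simp [this]
  rw [derivative_mul, dp, dq]
  rcases Nat.eq_zero_or_pos l with rfl | hl <;> rcases Nat.eq_zero_or_pos m with rfl | hm
  · simp
  · obtain ⟨m', rfl⟩ := Nat.exists_eq_succ_of_ne_zero hm.ne'
    simp only [Nat.mul_zero, pow_zero, Nat.cast_zero, Nat.cast_mul, Nat.cast_ofNat,
      Nat.cast_succ]
    have h1 : 2*(m'+1) - 1 = 2*m' + 1 := by omega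
    have h2 : 2*(m'+1) = (2*m'+1) + 1 := by omega
    rw [h1, h2]
    simp only [map_zero, map_add, map_sub, map_mul, map_ofNat, map_one, map_natCast, Nat.cast_succ, Nat.cast_mul, Nat.cast_ofNat]
    push_cast
    ring
  · obtain ⟨l', rfl⟩ := Nat.exists_eq_succ_of_ne_zero hl.ne'
    simp only [Nat.mul_zero, pow_zero, Nat.cast_zero, Nat.cast_mul, Nat.cast_ofNat,
      Nat.cast_succ]
    have h1 : 2*(l'+1) - 1 = 2*l' + 1 := by omega
    have h2 : 2*(l'+1) = (2*l'+1) + 1 := by omega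
    rw [h1, h2]
    simp only [map_zero, map_add, map_sub, map_mul, map_ofNat, map_one, map_natCast, Nat.cast_succ, Nat.cast_mul, Nat.cast_ofNat]
    push_cast
    ring
  · obtain ⟨l', rfl⟩ := Nat.exists_eq_succ_of_ne_zero hl.ne'
    obtain ⟨m', rfl⟩ := Nat.exists_eq_succ_of_ne_zero hm.ne'
    have h1 : 2*(l'+1) - 1 = 2*l' + 1 := by omega
    have h2 : 2*(l'+1) = (2*l'+1) + 1 := by omega
    have h3 : 2*(m'+1) - 1 = 2*m' + 1 := by omega
    have h4 : 2*(m'+1) = (2*m'+1) + 1 := by omega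
    rw [h1, h2, h3, h4]
    simp only [map_zero, map_add, map_sub, map_mul, map_ofNat, map_one, map_natCast, Nat.cast_succ, Nat.cast_mul, Nat.cast_ofNat]
    push_cast
    ring


noncomputable def PP (l m : ℕ) : ℂ[X] := (X + 1) ^ (2*l) * (X - 1) ^ (2*m)

lemma recP (l m j : ℕ) :
    ((j:ℂ)+2) * (PP l m).coeff (j+2) =
      ((2*l:ℂ) - 2*m) * (PP l m).coeff (j+1)
      + ((j:ℂ) - 2*l - 2*m) * (PP l m).coeff j := by
  have E := congrArg (fun p : ℂ[X] => p.coeff (j+1)) (odeP l m)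
  have hPP : ((X+1)^(2*l)*(X-1)^(2*m) : ℂ[X]) = PP l m := rfl
  simp only [hPP] at E
  rw [sub_mul, sub_mul, coeff_sub, coeff_sub, one_mul, coeff_derivative,
    mul_assoc, coeff_C_mul, coeff_C_mul, coeff_X_mul,
    (commute_X_pow (derivative (PP l m)) 2).eq, coeff_mul_X_pow'] at E
  cases j with
  | zero =>
    simp only [show ¬ (2 ≤ 0 + 1) by omega, if_false] at E
    push_cast at E ⊢
    linear_combination E
  | succ j' =>
    simp only [show (2 ≤ j' + 1 + 1) by omega, if_true, show j' + 1 + 1 - 2 = j' from by omega,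
      coeff_derivative] at E
    push_cast at E ⊢
    linear_combination E

lemma aN1 (l m : ℕ) (hN : 1 ≤ l + m) :
    ((l:ℂ) + m + 1) * (PP l m).coeff (l+m+1) = ((l:ℂ) - m) * (PP l m).coeff (l+m) := by
  obtain ⟨j, hj⟩ : ∃ j, l + m = j + 1 := ⟨l + m - 1, by omega⟩
  have R := recP l m j
  have pal : (PP l m).coeff j = (PP l m).coeff (j+2) := by
    have := palP l m j (by omega)
    rw [show 2*l+2*m - j = j + 2 from by omega] at this
    exact this
  rw [pal] at R
  rw [hj]
  push_cast
  linear_combination R / 2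

lemma coeffP (l m : ℕ) :
    (PP l m).coeff (l+m) =
      (-1:ℂ)^m * (Nat.factorial (2*l)) * (Nat.factorial (2*m)) /
        ((Nat.factorial l) * (Nat.factorial m) * (Nat.factorial (l+m))) := by
  induction m with
  | zero =>
    simp only [PP, Nat.mul_zero, pow_zero, mul_one, Nat.add_zero]
    rw [coeff_X_add_one_pow]
    rw [Nat.cast_choose ℂ (by omega : l ≤ 2*l)]
    simp [show 2*l - l = l from by omega]
  | succ m IH =>
    have hC2 : (C 2 : ℂ[X]) = 2 := map_ofNat C 2
    have hsplit : PP l (m+1) = PP l m * (X^2 - C 2 * X + 1) := by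
      rw [PP, PP, show 2*(m+1) = 2*m + 2 from by omega, pow_add, hC2]
      ring
    rcases Nat.eq_zero_or_pos (l + m) with hN0 | hN
    · obtain ⟨rfl, rfl⟩ : l = 0 ∧ m = 0 := by omega
      have h01 : PP 0 1 = X^2 - C 2 * X + 1 := by
        rw [hsplit]; simp [PP]
      rw [h01]
      simp [coeff_one, coeff_X, coeff_X_pow, coeff_C_mul, Nat.factorial]
    · have hne : ((l:ℂ) + m + 1) ≠ 0 := by
        have : ((l+m+1 : ℕ) : ℂ) ≠ 0 := Nat.cast_ne_zero.mpr (by omega)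
        push_cast at this
        convert this using 2 <;> push_cast <;> ring
      have key : (PP l (m+1)).coeff (l + (m+1)) =
          2 * (PP l m).coeff (l+m+1) - 2 * (PP l m).coeff (l+m) := by
        rw [show l + (m+1) = (l+m) + 1 from by omega, hsplit]
        rw [mul_add, mul_sub, coeff_add, coeff_sub, mul_one]
        rw [coeff_mul_X_pow', if_pos (by omega : 2 ≤ l + m + 1)]
        rw [show (PP l m * (C 2 * X)) = C 2 * (X * PP l m) from by ring, coeff_C_mul, coeff_X_mul]
        have pal : (PP l m).coeff (l + m + 1 - 2) = (PP l m).coeff (l+m+1) := by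
          have := palP l m (l+m-1) (by omega)
          rw [show 2*l+2*m - (l+m-1) = l+m + 1 from by omega] at this
          rw [show l + m + 1 - 2 = l+m - 1 from by omega]
          exact this
        rw [pal]
        ring
      have hy := aN1 l m hN
      rw [IH] at hy
      rw [key, IH]
      have fm : (Nat.factorial (m+1) : ℂ) = ((m:ℂ)+1) * Nat.factorial m := by
        rw [Nat.factorial_succ]; push_cast; ring
      have f2m : (Nat.factorial (2*(m+1)) : ℂ)
          = (2*(m:ℂ)+2) * (2*(m:ℂ)+1) * Nat.factorial (2*m) := by
        rw [show 2*(m+1) = (2*m+1)+1 from by omega, Nat.factorial_succ, Nat.factorial_succ]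
        push_cast; ring
      have fN : (Nat.factorial (l+(m+1)) : ℂ) = ((l:ℂ)+m+1) * Nat.factorial (l+m) := by
        rw [show l+(m+1) = (l+m)+1 from by omega, Nat.factorial_succ]
        push_cast; ring
      rw [fm, f2m, fN]
      have h1 : (Nat.factorial l : ℂ) ≠ 0 := Nat.cast_ne_zero.mpr (Nat.factorial_ne_zero l)
      have h2 : (Nat.factorial m : ℂ) ≠ 0 := Nat.cast_ne_zero.mpr (Nat.factorial_ne_zero m)
      have h3 : (Nat.factorial (l+m) : ℂ) ≠ 0 := Nat.cast_ne_zero.mpr (Nat.factorial_ne_zero _)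
      have h4 : ((m:ℂ)+1) ≠ 0 := by
        have : ((m+1 : ℕ) : ℂ) ≠ 0 := Nat.cast_ne_zero.mpr (by omega)
        push_cast at this; exact this
      apply mul_left_cancel₀ hne
      rw [mul_sub, show ((l:ℂ)+m+1) * (2 * (PP l m).coeff (l+m+1))
        = 2 * (((l:ℂ)+m+1) * (PP l m).coeff (l+m+1)) from by ring, hy]
      field_simp
      ring


lemma geom_filter (z : ℂ) (n : ℕ) (hn : 0 < n) (hzn : z ^ n = 1) :
    ∑ j ∈ Finset.Icc 1 n, z ^ j = if z = 1 then (n:ℂ) else 0 := by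
  rw [← Finset.Ico_add_one_right_eq_Icc, Finset.sum_Ico_eq_sum_range]
  norm_num
  split_ifs with h1
  · simp [h1]
  · have : ∑ i ∈ Finset.range n, z ^ (1 + i) = z * ∑ i ∈ Finset.range n, z ^ i := by
      rw [Finset.mul_sum]
      exact Finset.sum_congr rfl fun i _ => by rw [pow_add, pow_one]
    rw [this, geom_sum_eq h1, hzn]
    simp

lemma Ssum (n : ℕ) (hn : 0 < n) (ω : ℂ) (hω : IsPrimitiveRoot ω n) (i N : ℕ) :
    ∑ j ∈ Finset.Icc 1 n, ω ^ (j * i) * (ω ^ (j * N))⁻¹ =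
      if ((n:ℤ) ∣ (i:ℤ) - N) then (n:ℂ) else 0 := by
  have hω0 : ω ≠ 0 := hω.ne_zero hn.ne'
  have hterm : ∀ j : ℕ, ω ^ (j * i) * (ω ^ (j * N))⁻¹ = (ω ^ ((i:ℤ) - N)) ^ j := by
    intro j
    rw [← zpow_natCast ω (j*i), ← zpow_natCast ω (j*N), ← zpow_neg, ← zpow_add₀ hω0,
      ← zpow_natCast (ω ^ ((i:ℤ) - N)) j, ← zpow_mul]
    congr 1
    push_cast
    ring
  rw [Finset.sum_congr rfl fun j _ => hterm j]
  have hzn : (ω ^ ((i:ℤ) - N)) ^ n = 1 := by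
    rw [← zpow_natCast (ω ^ ((i:ℤ) - N)) n, ← zpow_mul, mul_comm, zpow_mul, zpow_natCast,
      hω.pow_eq_one, one_zpow]
  rw [geom_filter _ n hn hzn]
  congr 1
  simp [hω.zpow_eq_one_iff_dvd]

lemma partA (n l m : ℕ) (h : l + m < n) (ω : ℂ) (hω : IsPrimitiveRoot ω n) :
    (1/(n:ℂ)) * ∑ j ∈ Finset.Icc 1 n, (ω^j + 1)^(2*l) * (ω^j - 1)^(2*m) / ω^(j*(l+m))
    = (PP l m).coeff (l+m) := by
  have hn : 0 < n := by omega
  have hnc : (n:ℂ) ≠ 0 := Nat.cast_ne_zero.mpr hn.ne'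
  have hdeg : (PP l m).natDegree < 2*l + 2*m + 1 := by rw [PP, ndP]; omega
  have hterm : ∀ j : ℕ, (ω^j + 1)^(2*l) * (ω^j - 1)^(2*m) / ω^(j*(l+m))
      = ∑ i ∈ Finset.range (2*l+2*m+1),
          (PP l m).coeff i * (ω ^ (j*i) * (ω ^ (j*(l+m)))⁻¹) := by
    intro j
    have heval : (PP l m).eval (ω^j) = (ω^j + 1)^(2*l) * (ω^j - 1)^(2*m) := by
      simp [PP]
    rw [div_eq_mul_inv, ← heval, eval_eq_sum_range' hdeg, Finset.sum_mul]
    exact Finset.sum_congr rfl fun i _ => by rw [mul_assoc, pow_mul ω j i, pow_mul ω j (l+m)]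
  rw [Finset.sum_congr rfl fun j _ => hterm j, Finset.sum_comm]
  have hinner : ∀ i ∈ Finset.range (2*l+2*m+1),
      ∑ j ∈ Finset.Icc 1 n, (PP l m).coeff i * (ω ^ (j*i) * (ω ^ (j*(l+m)))⁻¹)
      = (PP l m).coeff i * (if ((n:ℤ) ∣ (i:ℤ) - (l+m)) then (n:ℂ) else 0) := by
    intro i _
    rw [← Finset.mul_sum, Ssum n hn ω hω i (l+m)]
    norm_cast
  rw [Finset.sum_congr rfl hinner]
  rw [Finset.sum_eq_single (l+m)]
  · rw [if_pos (by simp)]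
    field_simp
  · intro i hi hne
    rw [if_neg, mul_zero]
    intro hdvd
    have : (i:ℤ) - (l+m) = 0 := by
      apply Int.eq_zero_of_abs_lt_dvd hdvd
      have hi' : i < 2*l+2*m+1 := Finset.mem_range.mp hi
      rw [abs_lt]
      constructor <;> [skip; skip] <;>
        · push_cast
          omega
    have : i = l + m := by omega
    exact hne this
  · intro hmem
    exact absurd (Finset.mem_range.mpr (by omega)) hmem


lemma prodOdd (j : ℕ) : ∏ t ∈ Finset.range j, (2*(t:ℂ)+1)
    = (Nat.factorial (2*j)) / (2^j * Nat.factorial j) := by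
  induction j with
  | zero => simp
  | succ j IH =>
    rw [Finset.prod_range_succ, IH]
    have f1 : (Nat.factorial (2*(j+1)) : ℂ)
        = (2*(j:ℂ)+2) * (2*(j:ℂ)+1) * Nat.factorial (2*j) := by
      rw [show 2*(j+1) = (2*j+1)+1 from by omega, Nat.factorial_succ, Nat.factorial_succ]
      push_cast; ring
    have f2 : (Nat.factorial (j+1) : ℂ) = ((j:ℂ)+1) * Nat.factorial j := by
      rw [Nat.factorial_succ]; push_cast; ring
    rw [f1, f2]
    have h1 : (Nat.factorial j : ℂ) ≠ 0 := Nat.cast_ne_zero.mpr (Nat.factorial_ne_zero j)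
    have h2 : ((j:ℂ)+1) ≠ 0 := by
      have : ((j+1 : ℕ) : ℂ) ≠ 0 := Nat.cast_ne_zero.mpr (by omega)
      push_cast at this; exact this
    have h3 : (2:ℂ) ≠ 0 := two_ne_zero
    field_simp
    ring

lemma prodMain (l m : ℕ) :
    (-4:ℂ)^(l+m) * (∏ k ∈ Finset.range (l+m), ((m:ℂ) - 1/2 - k)) / (Nat.factorial (l+m))
    = (-1:ℂ)^m * (Nat.factorial (2*l)) * (Nat.factorial (2*m)) /
        ((Nat.factorial l) * (Nat.factorial m) * (Nat.factorial (l+m))) := by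
  have hsplit := Finset.prod_range_add (fun k => (m:ℂ) - 1/2 - k) m l
  rw [show l + m = m + l from by omega]
  rw [hsplit]
  have hp1 : (∏ k ∈ Finset.range m, ((m:ℂ) - 1/2 - k))
      = (∏ k ∈ Finset.range m, (2*(k:ℂ) + 1)) / 2^m := by
    rw [← Finset.prod_range_reflect]
    rw [show ((2:ℂ)^m) = ∏ _k ∈ Finset.range m, (2:ℂ) from by
      rw [Finset.prod_const, Finset.card_range]]
    rw [← Finset.prod_div_distrib]
    apply Finset.prod_congr rfl
    intro k hk
    have hk' : k < m := Finset.mem_range.mp hk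
    rw [show m - 1 - k = m - (k+1) from by omega, Nat.cast_sub (by omega : k + 1 ≤ m)]
    push_cast
    ring
  have hp2 : (∏ k ∈ Finset.range l, ((m:ℂ) - 1/2 - ((m:ℕ) + k : ℕ)))
      = (-1:ℂ)^l * ((∏ k ∈ Finset.range l, (2*(k:ℂ) + 1)) / 2^l) := by
    rw [show ((-1:ℂ)^l) = ∏ _k ∈ Finset.range l, (-1:ℂ) from by
      rw [Finset.prod_const, Finset.card_range]]
    rw [show ((2:ℂ)^l) = ∏ _k ∈ Finset.range l, (2:ℂ) from by
      rw [Finset.prod_const, Finset.card_range]]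
    rw [← Finset.prod_div_distrib, ← Finset.prod_mul_distrib]
    apply Finset.prod_congr rfl
    intro k _
    push_cast
    ring
  rw [hp1, hp2, prodOdd l, prodOdd m]
  have h1 : (Nat.factorial l : ℂ) ≠ 0 := Nat.cast_ne_zero.mpr (Nat.factorial_ne_zero l)
  have h2 : (Nat.factorial m : ℂ) ≠ 0 := Nat.cast_ne_zero.mpr (Nat.factorial_ne_zero m)
  have h3 : (Nat.factorial (m+l) : ℂ) ≠ 0 := Nat.cast_ne_zero.mpr (Nat.factorial_ne_zero _)
  have h4 : (2:ℂ) ≠ 0 := two_ne_zero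
  have e2 : ((-1:ℂ))^l * (-1)^l = 1 := by
    rw [← pow_add, ← two_mul, pow_mul]; norm_num
  have hsign : ((-4:ℂ))^(m+l) * ((-1:ℂ))^l = (-1:ℂ)^m * (2^l * 2^l * 2^m * 2^m) := by
    have e1 : ((-4:ℂ))^(m+l) = (-1)^m * (-1)^l * (2^m*2^m*2^l*2^l) := by
      rw [show (-4:ℂ) = (-1)*(2*2) from by norm_num, mul_pow, pow_add, mul_pow, pow_add]
      ring
    rw [e1]
    linear_combination ((-1:ℂ)^m * (2^m*2^m*2^l*2^l)) * e2
  have h5 : (2:ℂ)^l ≠ 0 := pow_ne_zero _ h4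
  have h6 : (2:ℂ)^m ≠ 0 := pow_ne_zero _ h4
  rw [div_eq_div_iff h3 (mul_ne_zero (mul_ne_zero h1 h2) h3)]
  field_simp
  linear_combination ((Nat.factorial (2*l) : ℂ) * (Nat.factorial (2*m) : ℂ)) * hsign

/-- For `ℓ + m < n` and `ζ` a primitive `2n`-th root of unity in `ℂ`,
`(1/n) ∑_{j=1}^{n} (ζ^{2j}+1)^{2ℓ} (ζ^{2j}-1)^{2m} / ζ^{2j(ℓ+m)}` equals the
coefficient of `x^(ℓ+m)` in the Maclaurin expansion of `(1-4x)^(m-1/2)`, i.e.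
`(-4)^(ℓ+m) (m-1/2)(m-3/2)⋯(m-1/2-(ℓ+m-1)) / (ℓ+m)!`. -/
theorem stmt4 (n ℓ m : ℕ) (h : ℓ + m < n) (ζ : ℂ)
    (hζ : IsPrimitiveRoot ζ (2 * n)) :
    (1 / (n : ℂ)) * ∑ j ∈ Finset.Icc 1 n,
        (ζ ^ (2 * j) + 1) ^ (2 * ℓ) * (ζ ^ (2 * j) - 1) ^ (2 * m) /
          ζ ^ (2 * j * (ℓ + m)) =
      (-4 : ℂ) ^ (ℓ + m) *
        (∏ k ∈ Finset.range (ℓ + m), ((m : ℂ) - 1 / 2 - (k : ℂ))) /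
        (Nat.factorial (ℓ + m) : ℂ) := by
  have hω : IsPrimitiveRoot (ζ ^ 2) n := hζ.pow (by omega) rfl
  have hbody : ∀ j : ℕ,
      (ζ ^ (2 * j) + 1) ^ (2 * ℓ) * (ζ ^ (2 * j) - 1) ^ (2 * m) / ζ ^ (2 * j * (ℓ + m))
      = ((ζ^2) ^ j + 1) ^ (2 * ℓ) * ((ζ^2) ^ j - 1) ^ (2 * m) / (ζ^2) ^ (j * (ℓ + m)) := by
    intro j
    rw [pow_mul ζ 2 j, show 2 * j * (ℓ + m) = 2 * (j * (ℓ + m)) from by ring,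
      pow_mul ζ 2 (j * (ℓ + m))]
  rw [Finset.sum_congr rfl fun j _ => hbody j, partA n ℓ m h (ζ^2) hω, coeffP, ← prodMain]
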